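/- Let G be an abelian group and S a finite 2-separable generating subset with 0 ∈ S. Let H be a finite subgroup of G which is a 2-fragment of S, and let φ : G → G/H be the canonical morphism. Then κ₁(φ(S)) = |φ(S)| - 1. -/

import Mathlib

open scoped Pointwise Classical

/-- The `k`-th connectivity `κ_k(S)`: minimum of `|X + S| - |X|` over finite `X`
with `|X| ≥ k` and `|X + S| ≤ |G| - k`, with `min ∅ = |G| - 2k + 1`. -/
noncomputable def kappa {G : Type*} [AddCommGroup G] [DecidableEq G]
    (k : ℕ) (S : Finset G) : ℕ :=
  if ∃ X : Finset G, k ≤ X.card ∧ (X + S).card ≤ Nat.card G - k then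
    sInf {d : ℕ | ∃ X : Finset G, k ≤ X.card ∧ (X + S).card ≤ Nat.card G - k ∧
      d = (X + S).card - X.card}
  else Nat.card G - 2 * k + 1

/-- `S` is `k`-separable: some `X` has `|X| ≥ k` and `|G \ (X + S)| ≥ k`. -/
def KSeparable {G : Type*} [AddCommGroup G] [DecidableEq G] (k : ℕ) (S : Finset G) : Prop :=
  ∃ X : Finset G, k ≤ X.card ∧ (X + S).card ≤ Nat.card G - k

/-- `X` is a `k`-fragment of `S`: `|X| ≥ k`, `|G \ (X + S)| ≥ k` and
`|X + S| - |X| = κ_k(S)`. -/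
def IsFragment {G : Type*} [AddCommGroup G] [DecidableEq G] (k : ℕ) (S X : Finset G) : Prop :=
  k ≤ X.card ∧ (X + S).card ≤ Nat.card G - k ∧ (X + S).card - X.card = kappa k S

/-- A hyper-atom of `S` is a subgroup of maximal cardinality which is a `1`-fragment. -/
def IsHyperAtom {G : Type*} [AddCommGroup G] [DecidableEq G]
    (S : Finset G) (H : AddSubgroup G) : Prop :=
  (∃ HF : Finset G, (HF : Set G) = (H : Set G) ∧ IsFragment 1 S HF) ∧
  ∀ (K : AddSubgroup G) (KF : Finset G), (KF : Set G) = (K : Set G) →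
    IsFragment 1 S KF → Nat.card K ≤ Nat.card H

private lemma preim_card {G : Type*} [AddCommGroup G] [Fintype G] [DecidableEq G]
    (H : AddSubgroup G) (A : Finset (G ⧸ H)) :
    (Finset.univ.filter (fun g => QuotientAddGroup.mk' H g ∈ A)).card
      = Nat.card H * A.card := by
  have hset : ((Finset.univ.filter (fun g => QuotientAddGroup.mk' H g ∈ A)) : Set G)
      = QuotientAddGroup.mk ⁻¹' (A : Set (G ⧸ H)) := by
    ext g; rw [Finset.mem_coe, Finset.mem_filter]; simp [QuotientAddGroup.mk'_apply]
  calc (Finset.univ.filter (fun g => QuotientAddGroup.mk' H g ∈ A)).card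
      = ((Finset.univ.filter (fun g => QuotientAddGroup.mk' H g ∈ A) : Finset G) : Set G).ncard :=
        (Set.ncard_coe_finset _).symm
    _ = Nat.card (QuotientAddGroup.mk ⁻¹' (A : Set (G ⧸ H))) := by
        rw [hset, Nat.card_coe_set_eq]
    _ = Nat.card (H × (A : Set (G ⧸ H))) :=
        Nat.card_congr (QuotientAddGroup.preimageMkEquivAddSubgroupProdSet H _)
    _ = Nat.card H * A.card := by
        rw [Nat.card_prod, Nat.card_coe_set_eq, Set.ncard_coe_finset]

private lemma preim_add {G : Type*} [AddCommGroup G] [Fintype G] [DecidableEq G]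
    (H : AddSubgroup G) (S : Finset G) (A : Finset (G ⧸ H)) :
    (Finset.univ.filter (fun g => QuotientAddGroup.mk' H g ∈ A)) + S
      = Finset.univ.filter
          (fun g => QuotientAddGroup.mk' H g ∈ A + S.image (QuotientAddGroup.mk' H)) := by
  ext g
  simp only [Finset.mem_add, Finset.mem_filter, Finset.mem_univ, true_and, Finset.mem_image]
  constructor
  · rintro ⟨y, hy, s, hs, rfl⟩
    exact ⟨_, hy, _, ⟨s, hs, rfl⟩, by simp⟩
  · rintro ⟨a, ha, t, ⟨s, hs, rfl⟩, hg⟩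
    refine ⟨g - s, ?_, s, hs, by abel⟩
    rw [map_sub, ← hg]; simpa using ha

theorem stmt11 {G : Type*} [AddCommGroup G] [Fintype G] [DecidableEq G] (S : Finset G)
    (hgen : AddSubgroup.closure (S : Set G) = ⊤) (h0S : (0 : G) ∈ S)
    (hsep : KSeparable 2 S)
    (H : AddSubgroup G) (HF : Finset G) (hHF : (HF : Set G) = (H : Set G))
    (hfrag : IsFragment 2 S HF) :
    kappa 1 (S.image (QuotientAddGroup.mk' H))
      = (S.image (QuotientAddGroup.mk' H)).card - 1 := by
  classical
  set T := S.image (QuotientAddGroup.mk' H) with hT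
  have hzeroT : ({0} : Finset (G ⧸ H)) + T = T := by
    rw [Finset.singleton_add]; simp
  have hHFeq : HF = Finset.univ.filter
      (fun g => QuotientAddGroup.mk' H g ∈ ({0} : Finset (G ⧸ H))) := by
    ext g
    have hmem : g ∈ HF ↔ g ∈ H := by rw [← Finset.mem_coe, hHF, SetLike.mem_coe]
    simp [hmem, QuotientAddGroup.eq_zero_iff]
  have hcardHF : HF.card = Nat.card H := by
    rw [hHFeq, preim_card]; simp
  have hH2 : 2 ≤ Nat.card H := hcardHF ▸ hfrag.1
  have hHFS : (HF + S).card = Nat.card H * T.card := by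
    rw [hHFeq, preim_add, ← hT, hzeroT, preim_card]
  have kappa2 : kappa 2 S = Nat.card H * (T.card - 1) := by
    rw [← hfrag.2.2, hHFS, hcardHF, Nat.mul_sub, mul_one]
  have hQpos : 0 < Nat.card (G ⧸ H) := Nat.card_pos
  have hG : Nat.card G = Nat.card (G ⧸ H) * Nat.card H :=
    AddSubgroup.card_eq_card_quotient_mul_card_addSubgroup H
  have hTlt : T.card < Nat.card (G ⧸ H) := by
    by_contra hcon
    push_neg at hcon
    have h4 : Nat.card H * Nat.card (G ⧸ H) ≤ Nat.card H * T.card :=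
      Nat.mul_le_mul_left _ hcon
    have h5 : Nat.card H * T.card ≤ Nat.card H * Nat.card (G ⧸ H) - 2 := by
      rw [← hHFS]
      calc (HF + S).card ≤ Nat.card G - 2 := hfrag.2.1
        _ = Nat.card H * Nat.card (G ⧸ H) - 2 := by rw [hG, mul_comm]
    have h6 : 2 ≤ Nat.card H * Nat.card (G ⧸ H) :=
      le_trans (by omega) (Nat.mul_le_mul hH2 hQpos)
    omega
  have hmem0 : (1 : ℕ) ≤ ({0} : Finset (G ⧸ H)).card ∧
      (({0} : Finset (G ⧸ H)) + T).card ≤ Nat.card (G ⧸ H) - 1 ∧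
      T.card - 1 = (({0} : Finset (G ⧸ H)) + T).card - ({0} : Finset (G ⧸ H)).card := by
    refine ⟨by simp, by rw [hzeroT]; omega, by rw [hzeroT]; simp⟩
  rw [kappa, if_pos ⟨{0}, hmem0.1, hmem0.2.1⟩]
  apply le_antisymm
  · exact Nat.sInf_le ⟨{0}, hmem0⟩
  · refine le_csInf ⟨T.card - 1, ⟨{0}, hmem0⟩⟩ ?_
    rintro d ⟨X, hX1, hX2, rfl⟩
    set Y := Finset.univ.filter (fun g => QuotientAddGroup.mk' H g ∈ X) with hY
    have hYcard : Y.card = Nat.card H * X.card := preim_card H X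
    have hYS : (Y + S).card = Nat.card H * (X + T).card := by
      rw [hY, preim_add, ← hT, preim_card]
    have hXpos : 1 ≤ X.card := hX1
    have hk2le : kappa 2 S ≤ (Y + S).card - Y.card := by
      have hsep' : ∃ X : Finset G, 2 ≤ X.card ∧ (X + S).card ≤ Nat.card G - 2 := hsep
      rw [kappa, if_pos hsep']
      refine Nat.sInf_le ⟨Y, ?_, ?_, rfl⟩
      · rw [hYcard]
        calc 2 = 2 * 1 := by ring
          _ ≤ Nat.card H * X.card := Nat.mul_le_mul hH2 hXpos
      · rw [hYS, hG, mul_comm (Nat.card (G ⧸ H))]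
        calc Nat.card H * (X + T).card ≤ Nat.card H * (Nat.card (G ⧸ H) - 1) :=
              Nat.mul_le_mul_left _ hX2
          _ = Nat.card H * Nat.card (G ⧸ H) - Nat.card H := by rw [Nat.mul_sub, mul_one]
          _ ≤ Nat.card H * Nat.card (G ⧸ H) - 2 := by omega
    rw [kappa2, hYS, hYcard, ← Nat.mul_sub] at hk2le
    exact Nat.le_of_mul_le_mul_left hk2le (lt_of_lt_of_le two_pos hH2)
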